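/- Consider an LTV system on an open interval I ⊆ ℝ with coefficients A, B, C, D, and assume that for every t0 ∈ I, x0 ∈ ℂ^n, and u ∈ L²_loc(I, ℂ^m) there exists exactly one locally absolutely continuous x : I → ℂ^n with x(t0) = x0 and ẋ(t) = A(t)x(t) + B(t)u(t) for a.e. t ∈ I. If the available storage V_a(t0,x0) := sup { −∫_{t0}^{t1} Re(y(t)* u(t)) dt : t1 ∈ I, t1 ≥ t0, (x,u,y) a state-input-output solution with x(t0) = x0 } is finite for every t0 ∈ I and x0 ∈ ℂ^n, then V_a : I × ℂ^n → ℝ is itself a storage function for the system; in particular the system is passive. -/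

import Mathlib

open MeasureTheory Matrix Set Filter Topology
open scoped ComplexOrder ENNReal

namespace Paper

/-- Loewner order `M ≤ N`, i.e. `N - M` is positive semidefinite. -/
def LoewnerLE {n : ℕ} (M N : Matrix (Fin n) (Fin n) ℂ) : Prop := (N - M).PosSemidef

/-- Entrywise (Bochner) interval integral of a matrix-valued function. -/
noncomputable def matInt {k l : ℕ} (G : ℝ → Matrix (Fin k) (Fin l) ℂ) (r s : ℝ) :
    Matrix (Fin k) (Fin l) ℂ :=
  Matrix.of fun i j => ∫ t in r..s, G t i j

/-- `Q` is absolutely upper semicontinuous on `[a,b]`: there is a Bochner-integrable,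
pointwise Hermitian `G` with `Q s - Q r ≤ ∫_r^s G` in the Loewner order. -/
def IsAUCOn {n : ℕ} (Q : ℝ → Matrix (Fin n) (Fin n) ℂ) (a b : ℝ) : Prop :=
  ∃ G : ℝ → Matrix (Fin n) (Fin n) ℂ,
    (∀ t, (G t).IsHermitian) ∧
    (∀ i j, IntegrableOn (fun t => G t i j) (Icc a b)) ∧
    ∀ r s : ℝ, a ≤ r → r ≤ s → s ≤ b → LoewnerLE (Q s - Q r) (matInt G r s)

/-- A matrix-valued function is locally `L^p` on `I` (entrywise, on compact subintervals). -/
def MemLocLp {k l : ℕ} (p : ℝ≥0∞) (I : Set ℝ) (F : ℝ → Matrix (Fin k) (Fin l) ℂ) : Prop :=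
  ∀ a b : ℝ, a ∈ I → b ∈ I → ∀ i j, MemLp (fun t => F t i j) p (volume.restrict (Icc a b))

/-- A vector-valued function is locally `L^p` on `I`. -/
def VecMemLocLp {k : ℕ} (p : ℝ≥0∞) (I : Set ℝ) (f : ℝ → Fin k → ℂ) : Prop :=
  ∀ a b : ℝ, a ∈ I → b ∈ I → ∀ i, MemLp (fun t => f t i) p (volume.restrict (Icc a b))

/-- `x` is locally absolutely continuous on `I` with (a.e.) derivative `x'`. -/
def VecLocAC {k : ℕ} (I : Set ℝ) (x x' : ℝ → Fin k → ℂ) : Prop :=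
  (∀ a b : ℝ, a ∈ I → b ∈ I → ∀ i, IntegrableOn (fun t => x' t i) (Icc a b)) ∧
  ∀ s t : ℝ, s ∈ I → t ∈ I → ∀ i, x t i = x s i + ∫ τ in s..t, x' τ i

/-- A matrix function is locally absolutely continuous on `I` with (a.e.) derivative `X'`. -/
def MatLocAC {k l : ℕ} (I : Set ℝ) (X X' : ℝ → Matrix (Fin k) (Fin l) ℂ) : Prop :=
  (∀ a b : ℝ, a ∈ I → b ∈ I → ∀ i j, IntegrableOn (fun t => X' t i j) (Icc a b)) ∧
  ∀ s t : ℝ, s ∈ I → t ∈ I → ∀ i j, X t i j = X s i j + ∫ τ in s..t, X' τ i j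

/-- The coefficients of an LTV system lie in the appropriate local Lebesgue spaces. -/
def IsLTV {n m : ℕ} (I : Set ℝ)
    (A : ℝ → Matrix (Fin n) (Fin n) ℂ) (B : ℝ → Matrix (Fin n) (Fin m) ℂ)
    (C : ℝ → Matrix (Fin m) (Fin n) ℂ) (D : ℝ → Matrix (Fin m) (Fin m) ℂ) : Prop :=
  MemLocLp 1 I A ∧ MemLocLp 2 I B ∧ MemLocLp 2 I C ∧ MemLocLp ⊤ I D

/-- `(x, u, y)` is a state-input-output solution of the LTV system on `I`. -/
def IsSIOSol {n m : ℕ} (I : Set ℝ)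
    (A : ℝ → Matrix (Fin n) (Fin n) ℂ) (B : ℝ → Matrix (Fin n) (Fin m) ℂ)
    (C : ℝ → Matrix (Fin m) (Fin n) ℂ) (D : ℝ → Matrix (Fin m) (Fin m) ℂ)
    (x : ℝ → Fin n → ℂ) (u y : ℝ → Fin m → ℂ) : Prop :=
  VecMemLocLp 2 I u ∧ VecMemLocLp 2 I y ∧
  (∃ x', VecLocAC I x x' ∧ ∀ᵐ t ∂volume, t ∈ I → x' t = A t *ᵥ x t + B t *ᵥ u t) ∧
  ∀ᵐ t ∂volume, t ∈ I → y t = C t *ᵥ x t + D t *ᵥ u t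

/-- The supplied energy `∫_{t0}^{t1} Re (y(t)^* u(t)) dt`. -/
noncomputable def supply {k : ℕ} (u y : ℝ → Fin k → ℂ) (t0 t1 : ℝ) : ℝ :=
  ∫ t in t0..t1, (star (y t) ⬝ᵥ u t).re

/-- `V` is a storage function for the LTV system on `I`. -/
def IsStorage {n m : ℕ} (I : Set ℝ)
    (A : ℝ → Matrix (Fin n) (Fin n) ℂ) (B : ℝ → Matrix (Fin n) (Fin m) ℂ)
    (C : ℝ → Matrix (Fin m) (Fin n) ℂ) (D : ℝ → Matrix (Fin m) (Fin m) ℂ)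
    (V : ℝ → (Fin n → ℂ) → ℝ) : Prop :=
  (∀ t ∈ I, ∀ x, 0 ≤ V t x) ∧ (∀ t ∈ I, V t 0 = 0) ∧
  ∀ x u y, IsSIOSol I A B C D x u y → ∀ t0 t1 : ℝ, t0 ∈ I → t1 ∈ I → t0 ≤ t1 →
    V t1 (x t1) - V t0 (x t0) ≤ supply u y t0 t1

/-- The quadratic storage function candidate `V_Q(t, x) = ½ x^* Q(t) x`. -/
noncomputable def quadStorage {k : ℕ} (Q : ℝ → Matrix (Fin k) (Fin k) ℂ) :
    ℝ → (Fin k → ℂ) → ℝ :=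
  fun t x => (1 / 2 : ℝ) * (star x ⬝ᵥ (Q t *ᵥ x)).re

/-- `X` is a fundamental solution matrix for `A` anchored at `t0`. -/
def IsFundamental {n : ℕ} (I : Set ℝ) (A : ℝ → Matrix (Fin n) (Fin n) ℂ) (t0 : ℝ)
    (X : ℝ → Matrix (Fin n) (Fin n) ℂ) : Prop :=
  t0 ∈ I ∧ X t0 = 1 ∧ (∀ t ∈ I, IsUnit (X t)) ∧
  ∃ X', MatLocAC I X X' ∧ ∀ᵐ t ∂volume, t ∈ I → X' t = A t * X t

/-- The supply set whose supremum is the available storage `V_a(t0, x0)`. -/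
def supplySet {n m : ℕ} (I : Set ℝ)
    (A : ℝ → Matrix (Fin n) (Fin n) ℂ) (B : ℝ → Matrix (Fin n) (Fin m) ℂ)
    (C : ℝ → Matrix (Fin m) (Fin n) ℂ) (D : ℝ → Matrix (Fin m) (Fin m) ℂ)
    (t0 : ℝ) (x0 : Fin n → ℂ) : Set ℝ :=
  { c | ∃ t1 x u y, t1 ∈ I ∧ t0 ≤ t1 ∧ IsSIOSol I A B C D x u y ∧ x t0 = x0 ∧
      c = -(supply u y t0 t1) }

/-- Null space decomposition structure: `M i j = 0` whenever `i` or `j` (0-based) is `≥ r`,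
and the top-left `r × r` block of `M` is Hermitian positive definite. -/
def NSDStruct {k : ℕ} (M : Matrix (Fin k) (Fin k) ℂ) (r : ℕ) : Prop :=
  (∀ i j : Fin k, (r ≤ (i : ℕ) ∨ r ≤ (j : ℕ)) → M i j = 0) ∧
  ∀ h : r ≤ k, (M.submatrix (Fin.castLE h) (Fin.castLE h)).PosDef

/-! ### Auxiliary lemmas for statement 11 -/

section Aux

private lemma ae_ne_const (t1 : ℝ) : ∀ᵐ τ : ℝ ∂volume, τ ≠ t1 := by
  have h : {τ : ℝ | ¬ τ ≠ t1} = {t1} := by ext τ; simp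
  rw [ae_iff, h]
  exact measure_singleton t1

private lemma memLp_conj {α : Type*} [MeasurableSpace α] {μ : Measure α} {f : α → ℂ}
    {p : ℝ≥0∞} (hf : MemLp f p μ) : MemLp (fun t => star (f t)) p μ :=
  hf.of_le (continuous_star.comp_aestronglyMeasurable hf.1)
    (Eventually.of_forall fun x => by simp)

/-- The supply integrand of two locally `L²` signals is interval integrable. -/
private lemma intervalIntegrable_supply {m : ℕ} {I : Set ℝ}
    {u y : ℝ → Fin m → ℂ} (hu : VecMemLocLp 2 I u) (hy : VecMemLocLp 2 I y)
    {a b : ℝ} (ha : a ∈ I) (hb : b ∈ I) :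
    IntervalIntegrable (fun t => (star (y t) ⬝ᵥ u t).re) volume a b := by
  have key : ∀ c d : ℝ, c ∈ I → d ∈ I →
      IntegrableOn (fun t => (star (y t) ⬝ᵥ u t).re) (Icc c d) volume := by
    intro c d hc hd
    have h1 : ∀ i : Fin m, Integrable (fun t => star (y t i) * u t i)
        (volume.restrict (Icc c d)) := by
      intro i
      have h2 : MemLp (fun t => star (y t i)) 2 (volume.restrict (Icc c d)) :=
        memLp_conj (hy c d hc hd i)
      have h3 := hu c d hc hd i
      have h4 : MemLp ((fun t => star (y t i)) • fun t => u t i) 1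
          (volume.restrict (Icc c d)) :=
        h3.smul (r := 1) h2 (hpqr := ⟨by simp [ENNReal.inv_two_add_inv_two]⟩)
      exact memLp_one_iff_integrable.mp (by simpa [Pi.smul_apply', smul_eq_mul, Pi.mul_def] using h4)
    have h5 : Integrable (fun t => star (y t) ⬝ᵥ u t) (volume.restrict (Icc c d)) := by
      have := integrable_finset_sum (μ := volume.restrict (Icc c d)) Finset.univ
        (f := fun i t => star (y t i) * u t i) (fun i _ => h1 i)
      simpa [dotProduct] using this
    simpa [IntegrableOn] using h5.re
  apply IntegrableOn.intervalIntegrable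
  rcases le_total a b with h | h
  · rw [uIcc_of_le h]; exact key a b ha hb
  · rw [uIcc_of_ge h]; exact key b a hb ha

private lemma vecLocAC_continuousOn {k : ℕ} {I : Set ℝ} (hIconn : I.OrdConnected)
    {x x' : ℝ → Fin k → ℂ} (h : VecLocAC I x x') {a b : ℝ} (ha : a ∈ I) (hb : b ∈ I)
    (hab : a ≤ b) (i : Fin k) : ContinuousOn (fun t => x t i) (Icc a b) := by
  have hint : IntegrableOn (fun t => x' t i) (uIcc a b) volume := by
    rw [uIcc_of_le hab]; exact h.1 a b ha hb i
  have hc := (continuousOn_const (c := x a i)).add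
    (intervalIntegral.continuousOn_primitive_interval hint)
  rw [uIcc_of_le hab] at hc
  exact hc.congr fun t ht => h.2 a t ha (hIconn.out ha hb ht) i

private lemma vecLocAC_bound {k : ℕ} {I : Set ℝ} (hIconn : I.OrdConnected)
    {x x' : ℝ → Fin k → ℂ} (h : VecLocAC I x x') {a b : ℝ} (ha : a ∈ I) (hb : b ∈ I)
    (hab : a ≤ b) : ∃ M : ℝ, 0 ≤ M ∧ ∀ t ∈ Icc a b, ∀ i, ‖x t i‖ ≤ M := by
  have hcont : ContinuousOn (fun t => x t) (Icc a b) :=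
    continuousOn_pi.mpr fun i => vecLocAC_continuousOn hIconn h ha hb hab i
  obtain ⟨M, hM⟩ := isCompact_Icc.exists_bound_of_continuousOn hcont
  refine ⟨max M 0, le_max_right _ _, fun t ht i => ?_⟩
  exact (norm_le_pi_norm (x t) i).trans ((hM t ht).trans (le_max_left _ _))

/-- `0` belongs to every supply set (use the trivial time interval with zero input). -/
private lemma zero_mem_supplySet {n m : ℕ} {I : Set ℝ} (hIconn : I.OrdConnected)
    {A : ℝ → Matrix (Fin n) (Fin n) ℂ} {B : ℝ → Matrix (Fin n) (Fin m) ℂ}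
    {C : ℝ → Matrix (Fin m) (Fin n) ℂ} {D : ℝ → Matrix (Fin m) (Fin m) ℂ}
    (hLTV : IsLTV I A B C D)
    (hexuniq : ∀ t0 ∈ I, ∀ x0 : Fin n → ℂ, ∀ u : ℝ → Fin m → ℂ, VecMemLocLp 2 I u →
        ∃ x x' : ℝ → Fin n → ℂ, VecLocAC I x x' ∧
          (∀ᵐ t ∂volume, t ∈ I → x' t = A t *ᵥ x t + B t *ᵥ u t) ∧ x t0 = x0 ∧
          ∀ z z' : ℝ → Fin n → ℂ, VecLocAC I z z' →
            (∀ᵐ t ∂volume, t ∈ I → z' t = A t *ᵥ z t + B t *ᵥ u t) → z t0 = x0 →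
            ∀ t ∈ I, z t = x t)
    {t0 : ℝ} (ht0 : t0 ∈ I) (x0 : Fin n → ℂ) :
    (0 : ℝ) ∈ supplySet I A B C D t0 x0 := by
  have hu0 : VecMemLocLp 2 I (fun _ : ℝ => (0 : Fin m → ℂ)) := by
    intro a b ha hb i
    exact MemLp.zero'
  obtain ⟨x, x', hAC, hODE, hx0, -⟩ := hexuniq t0 ht0 x0 _ hu0
  refine ⟨t0, x, (fun _ : ℝ => (0 : Fin m → ℂ)), fun t => C t *ᵥ x t, ht0, le_refl _,
    ⟨hu0, ?_, ⟨x', hAC, hODE⟩, ?_⟩, hx0, ?_⟩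
  · -- the output is locally L²
    intro a b ha hb i
    rcases le_or_gt a b with hab | hba
    · obtain ⟨M, hM0, hM⟩ := vecLocAC_bound hIconn hAC ha hb hab
      have hrw : (fun t => (C t *ᵥ x t) i) = fun t => ∑ j, C t i j * x t j := by
        funext t; simp [Matrix.mulVec, dotProduct]
      rw [hrw]
      apply memLp_finset_sum
      intro j _
      have hC := hLTV.2.2.1 a b ha hb i j
      have hxmeas : AEStronglyMeasurable (fun t => x t j)
          (volume.restrict (Icc a b)) :=
        (vecLocAC_continuousOn hIconn hAC ha hb hab j).aestronglyMeasurable measurableSet_Icc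
      refine MemLp.of_le_mul (c := M) hC (hC.1.mul hxmeas) ?_
      filter_upwards [ae_restrict_mem measurableSet_Icc] with t ht
      rw [norm_mul, mul_comm]
      exact mul_le_mul_of_nonneg_right (hM t ht j) (norm_nonneg _)
    · rw [Icc_eq_empty (not_le.mpr hba), Measure.restrict_empty]
      exact ⟨aestronglyMeasurable_zero_measure _, by simp [eLpNorm_measure_zero]⟩
  · exact Eventually.of_forall fun t _ => by simp [Matrix.mulVec_zero]
  · simp [supply, intervalIntegral.integral_same]

/-- Scaling a state-input-output solution by a real constant. -/
private lemma smul_sol {n m : ℕ} {I : Set ℝ}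
    {A : ℝ → Matrix (Fin n) (Fin n) ℂ} {B : ℝ → Matrix (Fin n) (Fin m) ℂ}
    {C : ℝ → Matrix (Fin m) (Fin n) ℂ} {D : ℝ → Matrix (Fin m) (Fin m) ℂ}
    {x : ℝ → Fin n → ℂ} {u y : ℝ → Fin m → ℂ}
    (h : IsSIOSol I A B C D x u y) (k : ℝ) :
    IsSIOSol I A B C D (fun t => (k : ℂ) • x t) (fun t => (k : ℂ) • u t)
      (fun t => (k : ℂ) • y t) := by
  obtain ⟨hu, hy, ⟨x', hAC, hODE⟩, hout⟩ := h
  have smulLp : ∀ {l : ℕ} (f : ℝ → Fin l → ℂ), VecMemLocLp 2 I f →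
      VecMemLocLp 2 I (fun t => (k : ℂ) • f t) := by
    intro l f hf a b ha hb i
    simpa [Pi.smul_apply, smul_eq_mul] using (hf a b ha hb i).const_mul (k : ℂ)
  refine ⟨smulLp u hu, smulLp y hy, ⟨fun t => (k : ℂ) • x' t, ⟨?_, ?_⟩, ?_⟩, ?_⟩
  · intro a b ha hb i
    simpa [IntegrableOn, Pi.smul_apply, smul_eq_mul] using (hAC.1 a b ha hb i).const_mul (k : ℂ)
  · intro s t hs ht i
    have h1 := hAC.2 s t hs ht i
    have h2 : (fun τ => ((k : ℂ) • x' τ) i) = fun τ => (k : ℂ) * x' τ i := by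
      funext τ; simp [smul_eq_mul]
    simp only [Pi.smul_apply, smul_eq_mul, h2, intervalIntegral.integral_const_mul]
    rw [h1]; ring
  · filter_upwards [hODE] with t h ht
    rw [Matrix.mulVec_smul, Matrix.mulVec_smul, ← smul_add, h ht]
  · filter_upwards [hout] with t h ht
    rw [Matrix.mulVec_smul, Matrix.mulVec_smul, ← smul_add, h ht]

private lemma supply_smul {l : ℕ} (u y : ℝ → Fin l → ℂ) (k t0 t1 : ℝ) :
    supply (fun t => (k : ℂ) • u t) (fun t => (k : ℂ) • y t) t0 t1
      = k ^ 2 * supply u y t0 t1 := by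
  unfold supply
  rw [← intervalIntegral.integral_const_mul]
  apply intervalIntegral.integral_congr
  intro t _
  show (star ((k : ℂ) • y t) ⬝ᵥ ((k : ℂ) • u t)).re = k ^ 2 * (star (y t) ⬝ᵥ u t).re
  have : star ((k : ℂ) • y t) ⬝ᵥ ((k : ℂ) • u t)
      = ((k : ℂ) * (k : ℂ)) * (star (y t) ⬝ᵥ u t) := by
    rw [star_smul, smul_dotProduct, dotProduct_smul]
    simp [smul_eq_mul, Complex.star_def, Complex.conj_ofReal]
    ring
  rw [this]
  have hc : (((k : ℂ) * (k : ℂ)) * (star (y t) ⬝ᵥ u t)).re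
      = (k * k) * (star (y t) ⬝ᵥ u t).re := by
    have : ((k : ℂ) * (k : ℂ)) = ((k * k : ℝ) : ℂ) := by push_cast; ring
    rw [this]
    simp [Complex.mul_re]
  rw [hc]; ring

/-- Concatenation of two state-input-output solutions that agree at time `t1`. -/
private lemma concat_sol {n m : ℕ} {I : Set ℝ}
    {A : ℝ → Matrix (Fin n) (Fin n) ℂ} {B : ℝ → Matrix (Fin n) (Fin m) ℂ}
    {C : ℝ → Matrix (Fin m) (Fin n) ℂ} {D : ℝ → Matrix (Fin m) (Fin m) ℂ}
    {x x₂ : ℝ → Fin n → ℂ} {u y u₂ y₂ : ℝ → Fin m → ℂ}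
    (h1 : IsSIOSol I A B C D x u y) (h2 : IsSIOSol I A B C D x₂ u₂ y₂)
    {t1 : ℝ} (ht1 : t1 ∈ I) (hglue : x₂ t1 = x t1) :
    ∃ z v w, IsSIOSol I A B C D z v w ∧ (∀ t, t ≤ t1 → z t = x t) ∧
      (∀ t0, t0 ≤ t1 → supply v w t0 t1 = supply u y t0 t1) ∧
      (∀ t2, t1 ≤ t2 → supply v w t1 t2 = supply u₂ y₂ t1 t2) := by
  classical
  obtain ⟨hu, hy, ⟨x', hxAC, hxODE⟩, hyout⟩ := h1
  obtain ⟨hu2, hy2, ⟨x2', hx2AC, hx2ODE⟩, hy2out⟩ := h2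
  set z : ℝ → Fin n → ℂ := fun t => if t < t1 then x t else x₂ t with hz
  set z' : ℝ → Fin n → ℂ := fun t => if t < t1 then x' t else x2' t with hz'
  set v : ℝ → Fin m → ℂ := fun t => if t < t1 then u t else u₂ t with hv
  set w : ℝ → Fin m → ℂ := fun t => if t < t1 then y t else y₂ t with hw
  -- MemLp for pointwise if-then-else
  have memPiece : ∀ (f g : ℝ → ℂ) (p : ℝ≥0∞) (μ : Measure ℝ), MemLp f p μ → MemLp g p μ →
      MemLp (fun t => if t < t1 then f t else g t) p μ := by
    intro f g p μ hf hg
    have hfg : (fun t => if t < t1 then f t else g t)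
        = (Iio t1).indicator f + (Iio t1)ᶜ.indicator g := by
      funext t
      by_cases h : t < t1
      · simp [Set.indicator_apply, Set.mem_Iio, h]
      · simp [Set.indicator_apply, Set.mem_Iio, h, not_lt.mp h]
    rw [hfg]
    exact (hf.indicator measurableSet_Iio).add (hg.indicator measurableSet_Iio.compl)
  have intPiece : ∀ (f g : ℝ → ℂ) (μ : Measure ℝ), Integrable f μ → Integrable g μ →
      Integrable (fun t => if t < t1 then f t else g t) μ := by
    intro f g μ hf hg
    have hfg : (fun t => if t < t1 then f t else g t)
        = (Iio t1).indicator f + (Iio t1)ᶜ.indicator g := by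
      funext t
      by_cases h : t < t1
      · simp [Set.indicator_apply, Set.mem_Iio, h]
      · simp [Set.indicator_apply, Set.mem_Iio, h, not_lt.mp h]
    rw [hfg]
    exact (hf.indicator measurableSet_Iio).add (hg.indicator measurableSet_Iio.compl)
  have hvLp : VecMemLocLp 2 I v := by
    intro a b ha hb i
    have : (fun t => v t i) = fun t => if t < t1 then u t i else u₂ t i := by
      funext t; by_cases h : t < t1 <;> simp [hv, h]
    rw [this]
    exact memPiece _ _ _ _ (hu a b ha hb i) (hu2 a b ha hb i)
  have hwLp : VecMemLocLp 2 I w := by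
    intro a b ha hb i
    have : (fun t => w t i) = fun t => if t < t1 then y t i else y₂ t i := by
      funext t; by_cases h : t < t1 <;> simp [hw, h]
    rw [this]
    exact memPiece _ _ _ _ (hy a b ha hb i) (hy2 a b ha hb i)
  have hzint : ∀ a b : ℝ, a ∈ I → b ∈ I → ∀ i, IntegrableOn (fun t => z' t i) (Icc a b) := by
    intro a b ha hb i
    have : (fun t => z' t i) = fun t => if t < t1 then x' t i else x2' t i := by
      funext t; by_cases h : t < t1 <;> simp [hz', h]
    rw [this]
    exact intPiece _ _ _ (hxAC.1 a b ha hb i) (hx2AC.1 a b ha hb i)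
  have hzii : ∀ a b : ℝ, a ∈ I → b ∈ I → ∀ i,
      IntervalIntegrable (fun t => z' t i) volume a b := by
    intro a b ha hb i
    apply IntegrableOn.intervalIntegrable
    rcases le_total a b with h | h
    · rw [uIcc_of_le h]; exact hzint a b ha hb i
    · rw [uIcc_of_ge h]; exact hzint b a hb ha i
  -- values of z
  have hzval_le : ∀ t, t ≤ t1 → z t = x t := by
    intro t ht
    rcases lt_or_eq_of_le ht with h | h
    · simp [hz, h]
    · subst h; simp [hz, hglue]
  have hzval_ge : ∀ t, t1 ≤ t → z t = x₂ t := by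
    intro t ht
    simp [hz, not_lt.mpr ht]
  -- integrals of z'
  have int_left : ∀ r : ℝ, r ≤ t1 → ∀ i,
      (∫ τ in t1..r, z' τ i) = ∫ τ in t1..r, x' τ i := by
    intro r hr i
    apply intervalIntegral.integral_congr_ae
    filter_upwards [ae_ne_const t1] with τ hne hmem
    rw [Set.uIoc_of_ge hr] at hmem
    have hlt : τ < t1 := lt_of_le_of_ne hmem.2 hne
    simp [hz', hlt]
  have int_right : ∀ s : ℝ, t1 ≤ s → ∀ i,
      (∫ τ in t1..s, z' τ i) = ∫ τ in t1..s, x2' τ i := by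
    intro s hs i
    apply intervalIntegral.integral_congr
    intro τ hτ
    rw [uIcc_of_le hs] at hτ
    simp [hz', not_lt.mpr hτ.1]
  have key : ∀ r ∈ I, ∀ i, z r i = z t1 i + ∫ τ in t1..r, z' τ i := by
    intro r hr i
    rcases le_total r t1 with h | h
    · rw [hzval_le r h, hzval_le t1 le_rfl, int_left r h i]
      exact hxAC.2 t1 r ht1 hr i
    · rw [hzval_ge r h, hzval_ge t1 le_rfl, int_right r h i]
      exact hx2AC.2 t1 r ht1 hr i
  have hzAC : VecLocAC I z z' := by
    refine ⟨hzint, fun s t hs ht i => ?_⟩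
    have hks := key s hs i
    have hkt := key t ht i
    have hsub := intervalIntegral.integral_interval_sub_left
      (f := fun τ => z' τ i) (μ := volume) (hzii t1 t ht1 ht i) (hzii t1 s ht1 hs i)
    linear_combination hkt - hks + hsub
  have hzODE : ∀ᵐ t ∂volume, t ∈ I → z' t = A t *ᵥ z t + B t *ᵥ v t := by
    filter_upwards [hxODE, hx2ODE, ae_ne_const t1] with τ hOx hOx2 hne hI
    by_cases h : τ < t1
    · simp only [hz, hz', hv, if_pos h]; exact hOx hI
    · simp only [hz, hz', hv, if_neg h]; exact hOx2 hI
  have hwout : ∀ᵐ t ∂volume, t ∈ I → w t = C t *ᵥ z t + D t *ᵥ v t := by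
    filter_upwards [hyout, hy2out] with τ hOy hOy2 hI
    by_cases h : τ < t1
    · simp only [hz, hw, hv, if_pos h]; exact hOy hI
    · simp only [hz, hw, hv, if_neg h]; exact hOy2 hI
  refine ⟨z, v, w, ⟨hvLp, hwLp, ⟨z', hzAC, hzODE⟩, hwout⟩, hzval_le, ?_, ?_⟩
  · intro t0 h01
    unfold supply
    apply intervalIntegral.integral_congr_ae
    filter_upwards [ae_ne_const t1] with τ hne hmem
    rw [Set.uIoc_of_le h01] at hmem
    have hlt : τ < t1 := lt_of_le_of_ne hmem.2 hne
    simp [hv, hw, hlt]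
  · intro t2 h12
    unfold supply
    apply intervalIntegral.integral_congr
    intro τ hτ
    rw [uIcc_of_le h12] at hτ
    simp [hv, hw, not_lt.mpr hτ.1]

end Aux

/-- if the available storage is finite, it is itself a storage function;
in particular the system is passive. -/
theorem statement11 {n m : ℕ} (I : Set ℝ) (hIopen : IsOpen I) (hIconn : I.OrdConnected)
    (A : ℝ → Matrix (Fin n) (Fin n) ℂ) (B : ℝ → Matrix (Fin n) (Fin m) ℂ)
    (C : ℝ → Matrix (Fin m) (Fin n) ℂ) (D : ℝ → Matrix (Fin m) (Fin m) ℂ)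
    (hLTV : IsLTV I A B C D)
    (hexuniq : ∀ t0 ∈ I, ∀ x0 : Fin n → ℂ, ∀ u : ℝ → Fin m → ℂ, VecMemLocLp 2 I u →
        ∃ x x' : ℝ → Fin n → ℂ, VecLocAC I x x' ∧
          (∀ᵐ t ∂volume, t ∈ I → x' t = A t *ᵥ x t + B t *ᵥ u t) ∧ x t0 = x0 ∧
          ∀ z z' : ℝ → Fin n → ℂ, VecLocAC I z z' →
            (∀ᵐ t ∂volume, t ∈ I → z' t = A t *ᵥ z t + B t *ᵥ u t) → z t0 = x0 →
            ∀ t ∈ I, z t = x t)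
    (hfin : ∀ t0 ∈ I, ∀ x0 : Fin n → ℂ, BddAbove (supplySet I A B C D t0 x0)) :
    IsStorage I A B C D (fun t x => sSup (supplySet I A B C D t x)) := by
  have hzm : ∀ t ∈ I, ∀ x0 : Fin n → ℂ, (0 : ℝ) ∈ supplySet I A B C D t x0 :=
    fun t ht x0 => zero_mem_supplySet hIconn hLTV hexuniq ht x0
  refine ⟨fun t ht x0 => le_csSup (hfin t ht x0) (hzm t ht x0), ?_, ?_⟩
  · -- the available storage vanishes at the zero state
    intro t ht
    refine le_antisymm ?_ (le_csSup (hfin t ht 0) (hzm t ht 0))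
    apply csSup_le ⟨0, hzm t ht 0⟩
    rintro c ⟨t1, x, u, y, ht1, ht01, hsol, hx0, rfl⟩
    have hnn : 0 ≤ supply u y t t1 := by
      by_contra hneg
      push_neg at hneg
      obtain ⟨M, hM⟩ := hfin t ht 0
      have h0M : (0 : ℝ) ≤ M := hM (hzm t ht 0)
      set s := supply u y t t1 with hs
      have hs0 : (0 : ℝ) < -s := by simp only [hs]; linarith
      set k := Real.sqrt ((M + 1) / (-s)) with hk
      have hk2 : k ^ 2 = (M + 1) / (-s) := Real.sq_sqrt (by positivity)
      have hmem : -(k ^ 2 * s) ∈ supplySet I A B C D t 0 :=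
        ⟨t1, fun τ => (k : ℂ) • x τ, fun τ => (k : ℂ) • u τ, fun τ => (k : ℂ) • y τ,
          ht1, ht01, smul_sol hsol k, by simp [hx0], by rw [supply_smul]⟩
      have hle := hM hmem
      rw [hk2] at hle
      have hsne : s ≠ 0 := by linarith
      have heq : -((M + 1) / (-s) * s) = M + 1 := by field_simp
      rw [heq] at hle
      linarith
    linarith
  · -- the dissipation inequality
    intro x u y hsol t0 t1 ht0 ht1 h01
    simp only
    rw [sub_le_iff_le_add]
    apply csSup_le ⟨0, hzm t1 ht1 (x t1)⟩
    rintro c ⟨t2, x₂, u₂, y₂, ht2, h12, hsol2, hx21, rfl⟩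
    obtain ⟨z, v, w, hzsol, hzval, hsupL, hsupR⟩ := concat_sol hsol hsol2 ht1 hx21
    have hmem : -(supply v w t0 t2) ∈ supplySet I A B C D t0 (x t0) :=
      ⟨t2, z, v, w, ht2, h01.trans h12, hzsol, hzval t0 h01, rfl⟩
    have hle := le_csSup (hfin t0 ht0 (x t0)) hmem
    have hsplit : supply v w t0 t2 = supply u y t0 t1 + supply u₂ y₂ t1 t2 := by
      have hint1 : IntervalIntegrable (fun τ => (star (w τ) ⬝ᵥ v τ).re) volume t0 t1 :=
        intervalIntegrable_supply hzsol.1 hzsol.2.1 ht0 ht1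
      have hint2 : IntervalIntegrable (fun τ => (star (w τ) ⬝ᵥ v τ).re) volume t1 t2 :=
        intervalIntegrable_supply hzsol.1 hzsol.2.1 ht1 ht2
      have hadd := intervalIntegral.integral_add_adjacent_intervals hint1 hint2
      have : supply v w t0 t2 = supply v w t0 t1 + supply v w t1 t2 := by
        unfold supply; rw [← hadd]
      rw [this, hsupL t0 h01, hsupR t2 h12]
    rw [hsplit] at hle
    linarith

end Paper
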